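/- Let f₁ and f₂ be convex increasing functions on [0,1] with f₁ differentiable and f₁(1) = f₂(1). Suppose there is a finite sequence 1 = c₀ > c₁ > ⋯ > c_n = 0 such that f₂(c_{j+1}) ≤ f₁(c_j) − (c_j − c_{j+1})·f₁'(c_j) for all 0 ≤ j < n. Then f₁(x) ≥ f₂(x) for all x ∈ [0,1]. -/

import Mathlib

/-- Tangent line of a convex differentiable function lies below the function. -/
lemma tangent_le {f f' : ℝ → ℝ} {S : Set ℝ} (hconv : ConvexOn ℝ S f)
    {a y : ℝ} (ha : a ∈ S) (hy : y ∈ S) (hd : HasDerivAt f (f' a) a) :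
    f a + f' a * (y - a) ≤ f y := by
  rcases lt_trichotomy a y with h | h | h
  · have := hconv.le_slope_of_hasDerivAt ha hy h hd
    rw [slope_def_field] at this
    have hya : (0:ℝ) < y - a := by linarith
    rw [le_div_iff₀ hya] at this
    nlinarith
  · simp [h]
  · have := hconv.slope_le_of_hasDerivAt hy ha h hd
    rw [slope_def_field] at this
    have hya : (0:ℝ) < a - y := by linarith
    rw [div_le_iff₀ hya] at this
    nlinarith

theorem stmt8 (f₁ f₂ f₁' : ℝ → ℝ) (n : ℕ) (c : ℕ → ℝ)
    (hconv₁ : ConvexOn ℝ (Set.Icc (0:ℝ) 1) f₁)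
    (hconv₂ : ConvexOn ℝ (Set.Icc (0:ℝ) 1) f₂)
    (hmono₁ : MonotoneOn f₁ (Set.Icc (0:ℝ) 1))
    (hmono₂ : MonotoneOn f₂ (Set.Icc (0:ℝ) 1))
    (hderiv : ∀ x ∈ Set.Icc (0:ℝ) 1, HasDerivAt f₁ (f₁' x) x)
    (heq : f₁ 1 = f₂ 1)
    (hc0 : c 0 = 1) (hcn : c n = 0)
    (hdec : ∀ j < n, c (j+1) < c j)
    (hineq : ∀ j < n, f₂ (c (j+1)) ≤ f₁ (c j) - (c j - c (j+1)) * f₁' (c j)) :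
    ∀ x ∈ Set.Icc (0:ℝ) 1, f₂ x ≤ f₁ x := by
  -- c is antitone on [0, n]
  have hanti : ∀ i j, i ≤ j → j ≤ n → c j ≤ c i := by
    intro i j
    induction j with
    | zero => intro hij _; have : i = 0 := Nat.le_zero.mp hij; rw [this]
    | succ k ih =>
      intro hij hjn
      rcases Nat.eq_or_lt_of_le hij with h | h
      · rw [h]
      · have h1 := ih (by omega) (by omega)
        have h2 := hdec k (by omega)
        linarith
  have hmem : ∀ j, j ≤ n → c j ∈ Set.Icc (0:ℝ) 1 := by
    intro j hj
    constructor
    · have := hanti j n hj le_rfl; rw [hcn] at this; linarith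
    · have := hanti 0 j (Nat.zero_le _) hj; rw [hc0] at this; linarith
  -- f₂ (c j) ≤ f₁ (c j) for all j ≤ n
  have hkey : ∀ j, j ≤ n → f₂ (c j) ≤ f₁ (c j) := by
    intro j hj
    cases j with
    | zero => rw [hc0]; linarith [heq]
    | succ k =>
      have hk : k < n := by omega
      have h1 := hineq k hk
      have htan := tangent_le hconv₁ (hmem k hk.le) (hmem (k+1) hj)
        (hderiv (c k) (hmem k hk.le))
      nlinarith
  intro x hx
  -- find j < n with c (j+1) ≤ x ≤ c j
  have hn : 0 < n := by
    rcases Nat.eq_zero_or_pos n with h | h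
    · subst h; rw [hc0] at hcn; norm_num at hcn
    · exact h
  by_cases hx1 : x = 1
  · subst hx1; linarith [heq]
  have hxlt : x < 1 := lt_of_le_of_ne hx.2 hx1
  have hex : ∃ j, c j ≤ x := ⟨n, by rw [hcn]; exact hx.1⟩
  classical
  obtain ⟨m, hcm, hmin⟩ : ∃ m, c m ≤ x ∧ ∀ k < m, ¬ c k ≤ x :=
    ⟨Nat.find hex, Nat.find_spec hex, fun k hk => Nat.find_min hex hk⟩
  have hmle : m ≤ n := by
    by_contra h
    push_neg at h
    exact hmin n h (by rw [hcn]; exact hx.1)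
  have hmpos : 0 < m := by
    rcases Nat.eq_zero_or_pos m with h | h
    · exfalso; rw [h, hc0] at hcm; linarith
    · exact h
  obtain ⟨j, rfl⟩ : ∃ j, m = j + 1 := ⟨m - 1, by omega⟩
  have hjn : j < n := by omega
  have hxcj : x < c j := by
    by_contra h
    push_neg at h
    exact hmin j (by omega) h
  -- convexity of f₂ on [c (j+1), c j]
  set a := c (j + 1) with ha
  set b := c j with hb
  have hab : a < b := hdec j hjn
  have hba : (0:ℝ) < b - a := by linarith
  set t : ℝ := (b - x) / (b - a) with ht
  have ht0 : 0 ≤ t := div_nonneg (by linarith) (by linarith)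
  have ht1 : 1 - t = (x - a) / (b - a) := by
    rw [ht]
    field_simp
    ring
  have ht1' : 0 ≤ 1 - t := by rw [ht1]; exact div_nonneg (by linarith) (by linarith)
  have hcomb : t • a + (1 - t) • b = x := by
    rw [smul_eq_mul, smul_eq_mul, ht]
    field_simp
    ring
  have hconvx := hconv₂.2 (hmem (j + 1) (by omega)) (hmem j hjn.le) ht0 ht1' (by ring : t + (1 - t) = 1)
  rw [hcomb] at hconvx
  -- bound f₂ a and f₂ b by the tangent line of f₁ at b
  have h1 := hineq j hjn
  have h2 := hkey j hjn.le
  have htan := tangent_le hconv₁ (hmem j hjn.le) hx (hderiv (c j) (hmem j hjn.le))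
  -- f₂ x ≤ t * f₂ a + (1-t) * f₂ b ≤ f₁ b + f₁' b * (x - b) ≤ f₁ x
  have hta : t * (b - a) = b - x := by
    rw [ht]; field_simp
  simp only [smul_eq_mul] at hconvx
  have e1 : t * f₂ (c (j + 1)) ≤ t * (f₁ (c j) - (c j - c (j + 1)) * f₁' (c j)) :=
    mul_le_mul_of_nonneg_left h1 ht0
  have e2 : (1 - t) * f₂ (c j) ≤ (1 - t) * f₁ (c j) :=
    mul_le_mul_of_nonneg_left h2 ht1'
  have e3 : t * ((c j - c (j + 1)) * f₁' (c j)) = (c j - x) * f₁' (c j) := by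
    rw [← mul_assoc]
    rw [show t * (c j - c (j + 1)) = c j - x from hta]
  nlinarith [e1, e2, e3, htan, hconvx]
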